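/- Let f : ℝ^d → ℝ be continuously differentiable and let x ∈ ℝ^d be a regular point of f, i.e. ∇f(x) ≠ 0. Then lim_{σ → 0+} p_f^<(x, σ) = 1/2. Consequently, for every p < 1/2 the function f is p-improvable at x, i.e. ξ_p^f(x) > 0. -/

import Mathlib

open MeasureTheory Set Filter

/-- Isotropic Gaussian measure `N(m, σ²I)` on `ℝ^d`, defined by its density
`x ↦ (2π)^{-d/2} σ^{-d} exp(−‖x−m‖²/(2σ²))` w.r.t. Lebesgue measure. -/
noncomputable def gaussES (d : ℕ) (m : EuclideanSpace ℝ (Fin d)) (σ : ℝ) :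
    Measure (EuclideanSpace ℝ (Fin d)) :=
  volume.withDensity fun x =>
    ENNReal.ofReal ((2 * Real.pi) ^ (-(d : ℝ) / 2) * (σ ^ d)⁻¹ *
      Real.exp (-‖x - m‖ ^ 2 / (2 * σ ^ 2)))

/-- Success probability of strict improvement: `p_f^<(m,σ)`. -/
noncomputable def pLt (d : ℕ) (f : EuclideanSpace ℝ (Fin d) → ℝ)
    (m : EuclideanSpace ℝ (Fin d)) (σ : ℝ) : ENNReal :=
  gaussES d m σ {x | f x < f m}

/-- Success probability of weak improvement: `p_f^≤(m,σ)`. -/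
noncomputable def pLe (d : ℕ) (f : EuclideanSpace ℝ (Fin d) → ℝ)
    (m : EuclideanSpace ℝ (Fin d)) (σ : ℝ) : ENNReal :=
  gaussES d m σ {x | f x ≤ f m}

/-- Lower step-size threshold `ξ_p^f(m) = inf {σ > 0 | p_f^<(m,σ) ≤ p}`, with `inf ∅ = ∞`. -/
noncomputable def xiES (d : ℕ) (f : EuclideanSpace ℝ (Fin d) → ℝ) (p : ℝ)
    (m : EuclideanSpace ℝ (Fin d)) : ENNReal :=
  sInf {s : ENNReal | ∃ σ : ℝ, 0 < σ ∧ s = ENNReal.ofReal σ ∧ pLt d f m σ ≤ ENNReal.ofReal p}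

/-- Upper step-size threshold `η_p^f(m) = sup {σ > 0 | p_f^≤(m,σ) ≥ p}`, with `sup ∅ = 0`. -/
noncomputable def etaES (d : ℕ) (f : EuclideanSpace ℝ (Fin d) → ℝ) (p : ℝ)
    (m : EuclideanSpace ℝ (Fin d)) : ENNReal :=
  sSup {s : ENNReal | ∃ σ : ℝ, 0 < σ ∧ s = ENNReal.ofReal σ ∧ ENNReal.ofReal p ≤ pLe d f m σ}

namespace GaussAux

variable {d : ℕ}

local notation "E" d => EuclideanSpace ℝ (Fin d)

/-- Standard Gaussian density on `ℝ^d`. -/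
noncomputable def phi (d : ℕ) (u : EuclideanSpace ℝ (Fin d)) : ℝ :=
  (2 * Real.pi) ^ (-(d : ℝ) / 2) * Real.exp (-‖u‖ ^ 2 / 2)

lemma phi_nonneg (d : ℕ) (u : EuclideanSpace ℝ (Fin d)) : 0 ≤ phi d u := by
  unfold phi; positivity

lemma phi_continuous (d : ℕ) : Continuous (phi d) := by
  unfold phi; fun_prop

lemma integrable_exp_norm (d : ℕ) {b : ℝ} (hb : 0 < b) :
    Integrable (fun v : EuclideanSpace ℝ (Fin d) => Real.exp (-b * ‖v‖ ^ 2)) := by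
  have := (GaussianFourier.integrable_cexp_neg_mul_sq_norm_add
    (V := EuclideanSpace ℝ (Fin d)) (b := (b : ℂ)) (by simpa using hb) 0 0).norm
  refine this.congr (Filter.Eventually.of_forall fun v => ?_)
  simp only [Complex.norm_exp]
  norm_num [← Complex.ofReal_pow]

lemma phi_integrable (d : ℕ) : Integrable (phi d) := by
  have h : Integrable (fun v : EuclideanSpace ℝ (Fin d) =>
      Real.exp (-(1/2 : ℝ) * ‖v‖ ^ 2)) := integrable_exp_norm d (by norm_num)
  have := h.const_mul ((2 * Real.pi) ^ (-(d : ℝ) / 2))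
  refine this.congr (Filter.Eventually.of_forall fun v => ?_)
  unfold phi; ring_nf

lemma phi_integral (d : ℕ) : ∫ u : EuclideanSpace ℝ (Fin d), phi d u = 1 := by
  unfold phi
  rw [integral_const_mul]
  have h : (fun v : EuclideanSpace ℝ (Fin d) => Real.exp (-‖v‖ ^ 2 / 2)) =
      fun v => Real.exp (-(1/2 : ℝ) * ‖v‖ ^ 2) := by funext v; ring_nf
  rw [h, GaussianFourier.integral_rexp_neg_mul_sq_norm (by norm_num : (0:ℝ) < 1/2),
    finrank_euclideanSpace_fin]
  have h2 : (Real.pi / (1/2 : ℝ)) = 2 * Real.pi := by ring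
  rw [h2, ← Real.rpow_add (by positivity), show (-(d:ℝ)/2 + (d:ℝ)/2) = 0 by ring,
    Real.rpow_zero]

lemma pLt_eq {d : ℕ} (f : EuclideanSpace ℝ (Fin d) → ℝ) (hf : Continuous f)
    (x : EuclideanSpace ℝ (Fin d)) {σ : ℝ} (hσ : 0 < σ) :
    pLt d f x σ = ENNReal.ofReal
      (∫ u : EuclideanSpace ℝ (Fin d),
        ({u : EuclideanSpace ℝ (Fin d) | f (x + σ • u) < f x}).indicator (phi d) u) := by
  classical
  have hS : MeasurableSet {y : EuclideanSpace ℝ (Fin d) | f y < f x} :=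
    (isOpen_lt hf continuous_const).measurableSet
  set c : EuclideanSpace ℝ (Fin d) → ℝ := fun y =>
    (2 * Real.pi) ^ (-(d : ℝ) / 2) * (σ ^ d)⁻¹ * Real.exp (-‖y - x‖ ^ 2 / (2 * σ ^ 2)) with hc
  have hcnn : ∀ y, 0 ≤ c y := fun y => by rw [hc]; positivity
  have hInt : Integrable c := by
    have h0 : Integrable (fun v : EuclideanSpace ℝ (Fin d) =>
        Real.exp (-(1/(2*σ^2)) * ‖v‖ ^ 2)) := integrable_exp_norm d (by positivity)
    have h1 : Integrable (fun y : EuclideanSpace ℝ (Fin d) =>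
        Real.exp (-(1/(2*σ^2)) * ‖y - x‖ ^ 2)) := h0.comp_sub_right x
    have := h1.const_mul ((2 * Real.pi) ^ (-(d : ℝ) / 2) * (σ ^ d)⁻¹)
    refine this.congr (Filter.Eventually.of_forall fun y => ?_)
    have he : -‖y - x‖ ^ 2 / (2 * σ ^ 2) = -(1/(2*σ^2)) * ‖y - x‖ ^ 2 := by
      field_simp
    simp only [hc]
    rw [he]
  have h1 : pLt d f x σ = ∫⁻ y in {y : EuclideanSpace ℝ (Fin d) | f y < f x},
      ENNReal.ofReal (c y) := by
    rw [pLt, gaussES, withDensity_apply _ hS]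
  have h2 : (∫⁻ y in {y : EuclideanSpace ℝ (Fin d) | f y < f x}, ENNReal.ofReal (c y))
      = ENNReal.ofReal (∫ y in {y : EuclideanSpace ℝ (Fin d) | f y < f x}, c y) :=
    (ofReal_integral_eq_lintegral_ofReal hInt.restrict
      (Filter.Eventually.of_forall fun y => hcnn y)).symm
  have h3 : (∫ y in {y : EuclideanSpace ℝ (Fin d) | f y < f x}, c y)
      = ∫ y, ({y : EuclideanSpace ℝ (Fin d) | f y < f x}).indicator c y :=
    (integral_indicator hS).symm
  have hptwise : ∀ u : EuclideanSpace ℝ (Fin d),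
      ({y : EuclideanSpace ℝ (Fin d) | f y < f x}).indicator c (x + σ • u)
      = (σ ^ d)⁻¹ *
        ({u : EuclideanSpace ℝ (Fin d) | f (x + σ • u) < f x}).indicator (phi d) u := by
    intro u
    have hnorm : ‖x + σ • u - x‖ ^ 2 = σ ^ 2 * ‖u‖ ^ 2 := by
      rw [add_sub_cancel_left, norm_smul, Real.norm_eq_abs, mul_pow, sq_abs]
    by_cases h : f (x + σ • u) < f x
    · rw [Set.indicator_of_mem (show (x + σ • u) ∈
          {y : EuclideanSpace ℝ (Fin d) | f y < f x} from h) c,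
        Set.indicator_of_mem (show u ∈
          {u : EuclideanSpace ℝ (Fin d) | f (x + σ • u) < f x} from h) (phi d),
        ]
      simp only [hc, phi]
      rw [hnorm]
      have he : -(σ ^ 2 * ‖u‖ ^ 2) / (2 * σ ^ 2) = -‖u‖ ^ 2 / 2 := by
        field_simp
      rw [he]; ring
    · rw [Set.indicator_of_notMem (show (x + σ • u) ∉
          {y : EuclideanSpace ℝ (Fin d) | f y < f x} from h),
        Set.indicator_of_notMem (show u ∉
          {u : EuclideanSpace ℝ (Fin d) | f (x + σ • u) < f x} from h), mul_zero]
  have h5 := Measure.integral_comp_smul (volume : Measure (EuclideanSpace ℝ (Fin d)))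
      (fun y => ({y : EuclideanSpace ℝ (Fin d) | f y < f x}).indicator c (x + y)) σ
  have h7 : |((σ:ℝ) ^ Module.finrank ℝ (EuclideanSpace ℝ (Fin d)))⁻¹| = (σ ^ d)⁻¹ := by
    rw [finrank_euclideanSpace_fin, abs_of_nonneg (by positivity)]
  have h4 : (∫ y, ({y : EuclideanSpace ℝ (Fin d) | f y < f x}).indicator c y)
      = ∫ y, ({y : EuclideanSpace ℝ (Fin d) | f y < f x}).indicator c (x + y) :=
    (integral_add_left_eq_self _ x).symm
  have h6 : (∫ u : EuclideanSpace ℝ (Fin d),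
      ({y : EuclideanSpace ℝ (Fin d) | f y < f x}).indicator c (x + σ • u))
      = (σ ^ d)⁻¹ * ∫ u, ({u : EuclideanSpace ℝ (Fin d) |
          f (x + σ • u) < f x}).indicator (phi d) u := by
    simp_rw [hptwise]
    exact integral_const_mul _ _
  have hσd : (σ : ℝ) ^ d ≠ 0 := by positivity
  rw [h1, h2, h3, h4]
  rw [h7, smul_eq_mul] at h5
  have h8 : (∫ y, ({y : EuclideanSpace ℝ (Fin d) | f y < f x}).indicator c (x + y))
      = σ ^ d * ∫ u : EuclideanSpace ℝ (Fin d),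
        ({y : EuclideanSpace ℝ (Fin d) | f y < f x}).indicator c (x + σ • u) := by
    rw [h5]; field_simp
  rw [h8, h6]
  congr 1
  field_simp

lemma ae_inner_ne {d : ℕ} (g : EuclideanSpace ℝ (Fin d)) (hg : g ≠ 0) :
    ∀ᵐ u : EuclideanSpace ℝ (Fin d) ∂volume, (inner ℝ g u : ℝ) ≠ 0 := by
  have hK : LinearMap.ker ((innerSL ℝ g :
      EuclideanSpace ℝ (Fin d) →L[ℝ] ℝ) : EuclideanSpace ℝ (Fin d) →ₗ[ℝ] ℝ) ≠ ⊤ := by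
    intro h
    have hgmem : g ∈ LinearMap.ker ((innerSL ℝ g :
        EuclideanSpace ℝ (Fin d) →L[ℝ] ℝ) : EuclideanSpace ℝ (Fin d) →ₗ[ℝ] ℝ) := by
      rw [h]; trivial
    have : (inner ℝ g g : ℝ) = 0 := by simpa using hgmem
    exact hg (inner_self_eq_zero.mp this)
  have h0 := Measure.addHaar_submodule (volume : Measure (EuclideanSpace ℝ (Fin d))) _ hK
  rw [ae_iff]
  convert h0 using 2
  ext u
  simp [LinearMap.mem_ker]

lemma halfspace_integral {d : ℕ} (g : EuclideanSpace ℝ (Fin d)) (hg : g ≠ 0) :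
    (∫ u : EuclideanSpace ℝ (Fin d),
      ({u : EuclideanSpace ℝ (Fin d) | (inner ℝ g u : ℝ) < 0}).indicator (phi d) u) = 1/2 := by
  have hcont : Continuous (fun u : EuclideanSpace ℝ (Fin d) => (inner ℝ g u : ℝ)) :=
    continuous_const.inner continuous_id
  have hmL : MeasurableSet {u : EuclideanSpace ℝ (Fin d) | (inner ℝ g u : ℝ) < 0} :=
    (isOpen_lt hcont continuous_const).measurableSet
  have hmR : MeasurableSet {u : EuclideanSpace ℝ (Fin d) | 0 < (inner ℝ g u : ℝ)} :=
    (isOpen_lt continuous_const hcont).measurableSet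
  have hIL : Integrable (({u : EuclideanSpace ℝ (Fin d) | (inner ℝ g u : ℝ) < 0}).indicator (phi d)) :=
    (phi_integrable d).indicator hmL
  have hIR : Integrable (({u : EuclideanSpace ℝ (Fin d) | 0 < (inner ℝ g u : ℝ)}).indicator (phi d)) :=
    (phi_integrable d).indicator hmR
  have hptwise : ∀ u : EuclideanSpace ℝ (Fin d),
      ({u : EuclideanSpace ℝ (Fin d) | 0 < (inner ℝ g u : ℝ)}).indicator (phi d) u
      = ({u : EuclideanSpace ℝ (Fin d) | (inner ℝ g u : ℝ) < 0}).indicator (phi d) (-u) := by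
    intro u
    have hphineg : phi d (-u) = phi d u := by unfold phi; rw [norm_neg]
    by_cases h : 0 < (inner ℝ g u : ℝ)
    · rw [Set.indicator_of_mem (show u ∈ {u : EuclideanSpace ℝ (Fin d) | 0 < (inner ℝ g u : ℝ)} from h), Set.indicator_of_mem
        (show -u ∈ {u : EuclideanSpace ℝ (Fin d) | (inner ℝ g u : ℝ) < 0} by
          simp only [Set.mem_setOf_eq, inner_neg_right]; linarith), hphineg]
    · rw [Set.indicator_of_notMem (show u ∉ {u : EuclideanSpace ℝ (Fin d) | 0 < (inner ℝ g u : ℝ)} from h), Set.indicator_of_notMem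
        (show -u ∉ {u : EuclideanSpace ℝ (Fin d) | (inner ℝ g u : ℝ) < 0} by
          simp only [Set.mem_setOf_eq, inner_neg_right, not_lt] at h ⊢; linarith)]
  have hAB : (∫ u : EuclideanSpace ℝ (Fin d),
      ({u : EuclideanSpace ℝ (Fin d) | 0 < (inner ℝ g u : ℝ)}).indicator (phi d) u)
      = ∫ u : EuclideanSpace ℝ (Fin d),
        ({u : EuclideanSpace ℝ (Fin d) | (inner ℝ g u : ℝ) < 0}).indicator (phi d) u := by
    rw [show (fun u : EuclideanSpace ℝ (Fin d) =>
        ({u : EuclideanSpace ℝ (Fin d) | 0 < (inner ℝ g u : ℝ)}).indicator (phi d) u)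
        = fun u => ({u : EuclideanSpace ℝ (Fin d) | (inner ℝ g u : ℝ) < 0}).indicator (phi d) (-u)
      from funext hptwise]
    exact integral_neg_eq_self _ _
  have hsum : (∫ u : EuclideanSpace ℝ (Fin d),
      (({u : EuclideanSpace ℝ (Fin d) | (inner ℝ g u : ℝ) < 0}).indicator (phi d) u
        + ({u : EuclideanSpace ℝ (Fin d) | 0 < (inner ℝ g u : ℝ)}).indicator (phi d) u))
      = ∫ u : EuclideanSpace ℝ (Fin d), phi d u := by
    refine integral_congr_ae ?_
    filter_upwards [ae_inner_ne g hg] with u hu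
    rcases hu.lt_or_gt with h | h
    · rw [Set.indicator_of_mem (show u ∈ {u : EuclideanSpace ℝ (Fin d) | (inner ℝ g u : ℝ) < 0} from h), Set.indicator_of_notMem
        (show u ∉ {u : EuclideanSpace ℝ (Fin d) | 0 < (inner ℝ g u : ℝ)} by
          simp only [Set.mem_setOf_eq, not_lt]; linarith), add_zero]
    · rw [Set.indicator_of_notMem
        (show u ∉ {u : EuclideanSpace ℝ (Fin d) | (inner ℝ g u : ℝ) < 0} by
          simp only [Set.mem_setOf_eq, not_lt]; linarith),
        Set.indicator_of_mem (show u ∈ {u : EuclideanSpace ℝ (Fin d) | 0 < (inner ℝ g u : ℝ)} from h), zero_add]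
  have hadd := integral_add hIL hIR
  rw [hsum, phi_integral] at hadd
  rw [← hAB] at hadd
  linarith [hadd]

lemma tendsto_main {d : ℕ} (f : EuclideanSpace ℝ (Fin d) → ℝ) (hf : ContDiff ℝ 1 f)
    (x : EuclideanSpace ℝ (Fin d)) (hx : gradient f x ≠ 0) :
    Tendsto (fun σ : ℝ => ∫ u : EuclideanSpace ℝ (Fin d),
        ({u : EuclideanSpace ℝ (Fin d) | f (x + σ • u) < f x}).indicator (phi d) u)
      (nhdsWithin 0 (Set.Ioi 0)) (nhds (1/2)) := by
  set g := gradient f x with hgdef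
  rw [← halfspace_integral g hx]
  have hinner : ∀ v, fderiv ℝ f x v = (inner ℝ g v : ℝ) := by
    intro v
    rw [hgdef]
    simp only [gradient]
    rw [← InnerProductSpace.toDual_apply_apply, LinearIsometryEquiv.apply_symm_apply]
  refine tendsto_integral_filter_of_dominated_convergence (phi d) ?_ ?_ (phi_integrable d) ?_
  · refine Filter.Eventually.of_forall fun σ => ?_
    have hopen : IsOpen {u : EuclideanSpace ℝ (Fin d) | f (x + σ • u) < f x} :=
      isOpen_lt (hf.continuous.comp (continuous_const.add (continuous_id.const_smul σ)))
        continuous_const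
    exact ((phi_continuous d).stronglyMeasurable.indicator
      hopen.measurableSet).aestronglyMeasurable
  · refine Filter.Eventually.of_forall fun σ => Filter.Eventually.of_forall fun u => ?_
    rw [Real.norm_eq_abs, abs_of_nonneg (Set.indicator_nonneg (fun v _ => phi_nonneg d v) u)]
    by_cases h : u ∈ {u : EuclideanSpace ℝ (Fin d) | f (x + σ • u) < f x}
    · rw [Set.indicator_of_mem h]
    · rw [Set.indicator_of_notMem h]; exact phi_nonneg d u
  · filter_upwards [ae_inner_ne g hx] with u hu
    have hdiff : DifferentiableAt ℝ f x := hf.differentiable one_ne_zero x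
    have hfd : HasFDerivAt f (fderiv ℝ f x) x := hdiff.hasFDerivAt
    have hcurve : HasDerivAt (fun σ : ℝ => x + σ • u) u 0 := by
      have h1 : HasDerivAt (fun σ : ℝ => σ • u) ((1:ℝ) • u) 0 :=
        (hasDerivAt_id (0:ℝ)).smul_const u
      simpa using h1.const_add x
    have hfd' : HasFDerivAt f (fderiv ℝ f x) ((fun σ : ℝ => x + σ • u) 0) := by
      simpa using hfd
    have hder : HasDerivAt (fun σ : ℝ => f (x + σ • u)) (inner ℝ g u : ℝ) 0 := by
      have := hfd'.comp_hasDerivAt 0 hcurve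
      simp only [hinner u] at this
      exact this
    have hslope : Tendsto (slope (fun σ : ℝ => f (x + σ • u)) 0)
        (nhdsWithin 0 (Set.Ioi 0)) (nhds (inner ℝ g u : ℝ)) :=
      (hasDerivAt_iff_tendsto_slope.mp hder).mono_left
        (nhdsWithin_mono 0 fun σ hσ => Set.mem_compl_singleton_iff.mpr (ne_of_gt hσ))
    rcases hu.lt_or_gt with hneg | hpos
    · have hev : ∀ᶠ σ in nhdsWithin (0:ℝ) (Set.Ioi 0), f (x + σ • u) < f x := by
        filter_upwards [hslope (Iio_mem_nhds hneg), self_mem_nhdsWithin] with σ hs hσ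
        have hσ0 : (0:ℝ) < σ := hσ
        simp only [Set.mem_preimage, Set.mem_Iio, slope_def_field] at hs
        have h0 : f (x + (0:ℝ) • u) = f x := by simp
        rw [h0, sub_zero] at hs
        rcases div_neg_iff.mp hs with ⟨_, h2⟩ | ⟨h1, _⟩
        · linarith
        · linarith
      have hval : ({u' : EuclideanSpace ℝ (Fin d) | (inner ℝ g u' : ℝ) < 0}).indicator
          (phi d) u = phi d u :=
        Set.indicator_of_mem (show u ∈ {u' : EuclideanSpace ℝ (Fin d) |
          (inner ℝ g u' : ℝ) < 0} from hneg) _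
      rw [hval]
      refine Tendsto.congr' ?_ tendsto_const_nhds
      filter_upwards [hev] with σ hσ
      exact (Set.indicator_of_mem (show u ∈ {u' : EuclideanSpace ℝ (Fin d) |
        f (x + σ • u') < f x} from hσ) _).symm
    · have hev : ∀ᶠ σ in nhdsWithin (0:ℝ) (Set.Ioi 0), f x < f (x + σ • u) := by
        filter_upwards [hslope (Ioi_mem_nhds hpos), self_mem_nhdsWithin] with σ hs hσ
        have hσ0 : (0:ℝ) < σ := hσ
        simp only [Set.mem_preimage, Set.mem_Ioi, slope_def_field] at hs
        have h0 : f (x + (0:ℝ) • u) = f x := by simp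
        rw [h0, sub_zero] at hs
        rcases div_pos_iff.mp hs with ⟨h1, _⟩ | ⟨_, h2⟩
        · linarith
        · linarith
      have hval : ({u' : EuclideanSpace ℝ (Fin d) | (inner ℝ g u' : ℝ) < 0}).indicator
          (phi d) u = 0 :=
        Set.indicator_of_notMem (show u ∉ {u' : EuclideanSpace ℝ (Fin d) |
          (inner ℝ g u' : ℝ) < 0} by simp only [Set.mem_setOf_eq, not_lt]; linarith) _
      rw [hval]
      refine Tendsto.congr' ?_ tendsto_const_nhds
      filter_upwards [hev] with σ hσ
      exact (Set.indicator_of_notMem (show u ∉ {u' : EuclideanSpace ℝ (Fin d) |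
        f (x + σ • u') < f x} by simp only [Set.mem_setOf_eq, not_lt]; linarith) _).symm

end GaussAux

/-- At a regular point `x` of a continuously differentiable `f`,
the success probability tends to `1/2` as `σ → 0⁺`; consequently `f` is
`p`-improvable at `x` (i.e. `ξ_p^f(x) > 0`) for every `p < 1/2`. -/
theorem regular_point_improvable
    (d : ℕ) (hd : 1 ≤ d)
    (f : EuclideanSpace ℝ (Fin d) → ℝ) (hf : ContDiff ℝ 1 f)
    (x : EuclideanSpace ℝ (Fin d)) (hx : gradient f x ≠ 0) :
    Tendsto (fun σ : ℝ => (pLt d f x σ).toReal) (nhdsWithin 0 (Ioi 0))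
        (nhds (1 / 2)) ∧
    ∀ p : ℝ, p < 1 / 2 → 0 < xiES d f p x := by
  classical
  have hcont : Continuous f := hf.continuous
  have hnn : ∀ σ : ℝ, 0 ≤ ∫ u : EuclideanSpace ℝ (Fin d),
      ({u : EuclideanSpace ℝ (Fin d) | f (x + σ • u) < f x}).indicator (GaussAux.phi d) u :=
    fun σ => integral_nonneg fun u =>
      Set.indicator_nonneg (fun v _ => GaussAux.phi_nonneg d v) u
  have htend : Tendsto (fun σ : ℝ => (pLt d f x σ).toReal)
      (nhdsWithin 0 (Ioi 0)) (nhds (1/2)) := by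
    refine Tendsto.congr' ?_ (GaussAux.tendsto_main f hf x hx)
    filter_upwards [self_mem_nhdsWithin] with σ hσ
    rw [GaussAux.pLt_eq f hcont x hσ, ENNReal.toReal_ofReal (hnn σ)]
  refine ⟨htend, fun p hp => ?_⟩
  have hmax : max p 0 < 1/2 := max_lt hp (by norm_num)
  have hev : ∀ᶠ σ in nhdsWithin (0:ℝ) (Ioi 0), max p 0 < (pLt d f x σ).toReal :=
    htend (Ioi_mem_nhds hmax)
  rw [eventually_nhdsWithin_iff] at hev
  rcases Metric.eventually_nhds_iff.mp hev with ⟨ε, hε, hball⟩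
  have hkey : ∀ s ∈ {s : ENNReal | ∃ σ : ℝ, 0 < σ ∧ s = ENNReal.ofReal σ ∧
      pLt d f x σ ≤ ENNReal.ofReal p}, ENNReal.ofReal (ε/2) ≤ s := by
    rintro s ⟨σ, hσ, rfl, hle⟩
    by_contra hcon
    push_neg at hcon
    have hσε : σ < ε/2 :=
      (ENNReal.ofReal_lt_ofReal_iff_of_nonneg hσ.le).mp hcon
    have hdist : dist σ 0 < ε := by
      rw [Real.dist_eq, sub_zero, abs_of_pos hσ]; linarith
    have h1 : max p 0 < (pLt d f x σ).toReal := hball hdist hσ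
    have h2 : (pLt d f x σ).toReal ≤ max p 0 := by
      have hle2 : pLt d f x σ ≤ ENNReal.ofReal (max p 0) :=
        le_trans hle (ENNReal.ofReal_le_ofReal (le_max_left _ _))
      calc (pLt d f x σ).toReal
          ≤ (ENNReal.ofReal (max p 0)).toReal :=
            ENNReal.toReal_mono ENNReal.ofReal_ne_top hle2
        _ = max p 0 := ENNReal.toReal_ofReal (le_max_right _ _)
    linarith
  calc (0:ENNReal) < ENNReal.ofReal (ε/2) := ENNReal.ofReal_pos.mpr (by linarith)
    _ ≤ xiES d f p x := le_sInf hkey
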